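/- Let K be a field and d ≥ 1. Every rational function f ∈ K(X₁,…,X_d) can be written as a finite sum of rational functions p_j/d_j with p_j, d_j ∈ K[X₁,…,X_d], d_j ≠ 0, such that each denominator d_j has at most d pairwise non-associate irreducible factors. -/

import Mathlib

open MvPolynomial Finsupp UniqueFactorizationMonoid

section Aux

variable {K : Type*} [Field K] {d : ℕ}

open Classical in
lemma aux_mem_span (M : ℕ) (p : MvPolynomial (Fin d) K) (hp : p.totalDegree ≤ M) :
    p ∈ Submodule.span K ((Finset.univ.image (fun t : Fin d → Fin (M+1) =>
      (monomial (Finsupp.equivFunOnFinite.symm fun i => (t i : ℕ)) (1:K) : MvPolynomial (Fin d) K))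
        : Finset (MvPolynomial (Fin d) K)) : Set (MvPolynomial (Fin d) K)) := by
  rw [← p.support_sum_monomial_coeff]
  refine Submodule.sum_mem _ fun v hv => ?_
  have hvi : ∀ i, v i < M + 1 := by
    intro i
    refine Nat.lt_succ_of_le (le_trans ?_ (le_trans (MvPolynomial.le_totalDegree hv) hp))
    by_cases h : i ∈ v.support
    · exact Finset.single_le_sum (fun _ _ => Nat.zero_le _) h
    · simp [Finsupp.notMem_support_iff.mp h]
  have : (monomial v (coeff v p) : MvPolynomial (Fin d) K) = coeff v p • monomial v 1 := by
    rw [MvPolynomial.smul_monomial, smul_eq_mul, mul_one]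
  rw [this]
  refine Submodule.smul_mem _ _ (Submodule.subset_span ?_)
  simp only [Finset.coe_image, Set.mem_image, Finset.mem_coe, Finset.mem_univ, Finset.coe_univ,
    Set.mem_univ, true_and]
  exact ⟨fun i => ⟨v i, hvi i⟩, by ext a; simp⟩

open Classical in
lemma exists_relation {m : ℕ} (hm : d < m) (q : Fin m → MvPolynomial (Fin d) K) :
    ∃ F : MvPolynomial (Fin m) K, F ≠ 0 ∧ MvPolynomial.aeval q F = 0 := by
  set D := Finset.univ.sup (fun i => (q i).totalDegree) with hD
  set B := (m * D + 1) ^ d with hB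
  set M := m * B * D with hM
  set v : (Fin m → Fin (B+1)) → MvPolynomial (Fin d) K := fun t => ∏ i, q i ^ (t i : ℕ) with hv
  have hdeg : ∀ t, (v t).totalDegree ≤ M := by
    intro t
    refine le_trans (totalDegree_finset_prod _ _) (le_trans (Finset.sum_le_sum
      (f := fun i => ((q i)^(t i : ℕ)).totalDegree) (g := fun _ => B * D)
      (fun i _ => le_trans (totalDegree_pow _ _)
        (Nat.mul_le_mul (Nat.lt_succ_iff.mp (t i).isLt)
          (Finset.le_sup (f := fun i => (q i).totalDegree) (Finset.mem_univ i))))) ?_)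
    simp [hM, Finset.sum_const, mul_assoc]
  have hnli : ¬ LinearIndependent K v := by
    intro h
    have hle := linearIndependent_le_span' v h
      ((Finset.univ.image (fun t : Fin d → Fin (M+1) =>
        (monomial (Finsupp.equivFunOnFinite.symm fun i => (t i : ℕ)) (1:K)
          : MvPolynomial (Fin d) K))) : Set (MvPolynomial (Fin d) K))
      (by rintro x ⟨t, rfl⟩; exact aux_mem_span M (v t) (hdeg t))
    rw [Cardinal.mk_fintype] at hle
    have hle' : (B+1)^m ≤ (M+1)^d := by
      have h1 : Fintype.card (Fin m → Fin (B+1)) = (B+1)^m := by simp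
      have h2 : Fintype.card ↑((Finset.univ.image (fun t : Fin d → Fin (M+1) =>
          (monomial (Finsupp.equivFunOnFinite.symm fun i => (t i : ℕ)) (1:K)
            : MvPolynomial (Fin d) K))) : Set (MvPolynomial (Fin d) K)) ≤ (M+1)^d := by
        simp only [Finset.coe_sort_coe, Fintype.card_coe]
        refine le_trans Finset.card_image_le ?_
        simp
      rw [h1] at hle
      exact_mod_cast le_trans hle (Nat.cast_le.mpr h2)
    have hlt : (M+1)^d < (B+1)^m := by
      have e1 : M + 1 ≤ (m*D+1)*(B+1) := by rw [hM]; nlinarith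
      have e2 : (M+1)^d ≤ ((m*D+1)*(B+1))^d := Nat.pow_le_pow_left e1 d
      have e3 : ((m*D+1)*(B+1))^d = B * (B+1)^d := by rw [mul_pow, hB]
      have e4 : B * (B+1)^d < (B+1) * (B+1)^d :=
        Nat.mul_lt_mul_of_pos_right (Nat.lt_succ_self B) (Nat.pow_pos (Nat.succ_pos B))
      have e5 : (B+1) * (B+1)^d = (B+1)^(d+1) := by rw [pow_succ, mul_comm]
      have e6 : (B+1)^(d+1) ≤ (B+1)^m := Nat.pow_le_pow_right (Nat.succ_pos B) hm
      calc (M+1)^d ≤ ((m*D+1)*(B+1))^d := e2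
        _ = B * (B+1)^d := e3
        _ < (B+1) * (B+1)^d := e4
        _ = (B+1)^(d+1) := e5
        _ ≤ (B+1)^m := e6
    exact absurd hle' (not_le.mpr hlt)
  obtain ⟨g, hsum, t₀, hg⟩ := Fintype.not_linearIndependent_iff.mp hnli
  have hinj : Function.Injective (fun t : Fin m → Fin (B+1) =>
      (Finsupp.equivFunOnFinite.symm fun i => (t i : ℕ) : Fin m →₀ ℕ)) := by
    intro a b hab
    have h2 := Finsupp.equivFunOnFinite.symm.injective hab
    funext i
    exact Fin.ext (congrFun h2 i)
  refine ⟨∑ t, monomial (Finsupp.equivFunOnFinite.symm fun i => (t i : ℕ)) (g t), ?_, ?_⟩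
  · intro h0
    apply hg
    have hc : coeff (Finsupp.equivFunOnFinite.symm fun i => (t₀ i : ℕ))
        (∑ t : Fin m → Fin (B+1), (monomial (Finsupp.equivFunOnFinite.symm fun i => (t i : ℕ)) (g t)
          : MvPolynomial (Fin m) K)) = g t₀ := by
      rw [MvPolynomial.coeff_sum]
      rw [Finset.sum_eq_single t₀]
      · rw [coeff_monomial, if_pos rfl]
      · intro t _ hne
        rw [coeff_monomial, if_neg (fun h => hne (hinj h))]
      · intro h; exact absurd (Finset.mem_univ t₀) h
    rw [h0] at hc
    simp at hc
    exact hc.symm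
  · rw [map_sum, ← hsum]
    refine Finset.sum_congr rfl fun t _ => ?_
    rw [aeval_monomial, Finsupp.prod_fintype _ _ (fun i => pow_zero _)]
    simp [Algebra.smul_def, hv]

variable (K d) in
def GoodFrac (f : FractionRing (MvPolynomial (Fin d) K)) : Prop :=
  ∃ (n : ℕ) (p den : Fin n → MvPolynomial (Fin d) K),
    (∀ j, den j ≠ 0) ∧
    (∀ j, ∃ (k : ℕ), k ≤ d ∧
      ∃ (c : MvPolynomial (Fin d) K) (r : Fin k → MvPolynomial (Fin d) K) (e : Fin k → ℕ),
        IsUnit c ∧ (∀ i, Irreducible (r i)) ∧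
        (∀ i i', i ≠ i' → ¬ Associated (r i) (r i')) ∧
        den j = c * ∏ i, r i ^ e i) ∧
    f = ∑ j, algebraMap (MvPolynomial (Fin d) K) (FractionRing (MvPolynomial (Fin d) K)) (p j) /
          algebraMap (MvPolynomial (Fin d) K) (FractionRing (MvPolynomial (Fin d) K)) (den j)

lemma GoodFrac.zero : GoodFrac K d 0 :=
  ⟨0, Fin.elim0, Fin.elim0, fun j => j.elim0, fun j => j.elim0, by simp⟩

lemma GoodFrac.add {f g} (hf : GoodFrac K d f) (hg : GoodFrac K d g) : GoodFrac K d (f + g) := by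
  obtain ⟨n₁, p₁, e₁, h1, h2, h3⟩ := hf
  obtain ⟨n₂, p₂, e₂, g1, g2, g3⟩ := hg
  refine ⟨n₁+n₂, Fin.append p₁ p₂, Fin.append e₁ e₂, ?_, ?_, ?_⟩
  · refine Fin.addCases ?_ ?_ <;> intro i
    · simpa [Fin.append_left] using h1 i
    · simpa [Fin.append_right] using g1 i
  · refine Fin.addCases ?_ ?_ <;> intro i <;>
      simp only [Fin.append_left, Fin.append_right] <;> [exact h2 i; exact g2 i]
  · rw [Fin.sum_univ_add]
    simp only [Fin.append_left, Fin.append_right]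
    rw [h3, g3]

lemma GoodFrac.sum {ι : Type*} (s : Finset ι) (t : ι → FractionRing (MvPolynomial (Fin d) K))
    (h : ∀ a ∈ s, GoodFrac K d (t a)) : GoodFrac K d (∑ a ∈ s, t a) :=
  Finset.sum_induction t _ (fun _ _ => GoodFrac.add) GoodFrac.zero h

lemma GoodFrac.single {k : ℕ} (hk : k ≤ d) (q : Fin k → MvPolynomial (Fin d) K)
    (hq : ∀ i, Irreducible (q i))
    (hassoc : ∀ i i', i ≠ i' → ¬ Associated (q i) (q i')) (e : Fin k → ℕ)
    (p : MvPolynomial (Fin d) K) :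
    GoodFrac K d (algebraMap _ (FractionRing (MvPolynomial (Fin d) K)) p /
      algebraMap _ _ (∏ i, q i ^ e i)) := by
  have hden : (∏ i, q i ^ e i) ≠ 0 :=
    Finset.prod_ne_zero_iff.mpr fun i _ => pow_ne_zero _ (hq i).ne_zero
  exact ⟨1, fun _ => p, fun _ => ∏ i, q i ^ e i, fun _ => hden,
    fun _ => ⟨k, hk, 1, q, e, isUnit_one, hq, hassoc, (one_mul _).symm⟩,
    by rw [Fin.sum_univ_one]⟩

lemma goodfrac_div (hd : 1 ≤ d) :
    ∀ k (q : Fin k → MvPolynomial (Fin d) K), (∀ i, Irreducible (q i)) →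
    (∀ i i', i ≠ i' → ¬ Associated (q i) (q i')) → ∀ (e : Fin k → ℕ) (p : MvPolynomial (Fin d) K),
    GoodFrac K d (algebraMap _ (FractionRing (MvPolynomial (Fin d) K)) p /
      algebraMap _ _ (∏ i, q i ^ e i)) := by
  intro k
  induction k using Nat.strong_induction_on with
  | _ k IH =>
  intro q hq hassoc e p
  by_cases hk : k ≤ d
  · exact GoodFrac.single hk q hq hassoc e p
  push_neg at hk
  obtain ⟨k', rfl⟩ : ∃ k', k = k' + 1 := ⟨k - 1, by omega⟩
  set φ := algebraMap (MvPolynomial (Fin d) K) (FractionRing (MvPolynomial (Fin d) K)) with hφdef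
  have hinj : Function.Injective φ :=
    IsFractionRing.injective (MvPolynomial (Fin d) K) (FractionRing (MvPolynomial (Fin d) K))
  have hφ : ∀ x : MvPolynomial (Fin d) K, x ≠ 0 → φ x ≠ 0 := fun x hx => by
    simpa using (map_ne_zero_iff _ hinj).mpr hx
  set g : Fin (k'+1) → MvPolynomial (Fin d) K := fun i => q i ^ e i with hgdef
  have hg0 : ∀ i, g i ≠ 0 := fun i => pow_ne_zero _ (hq i).ne_zero
  obtain ⟨F, hF0, hFq⟩ := exists_relation hk g
  have hsupp : F.support.Nonempty :=
    Finset.nonempty_iff_ne_empty.mpr (fun h => hF0 (MvPolynomial.support_eq_empty.mp h))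
  obtain ⟨β, hβs, hβmin⟩ := F.support.exists_min_image (fun a => ∑ i, a i) hsupp
  have hkey : ∀ α ∈ F.support, α ≠ β → ∃ i, β i < α i := by
    intro α hα hne
    by_contra hcon; push_neg at hcon
    obtain ⟨i, hi⟩ := Finsupp.ne_iff.mp hne
    have hlt : α i < β i := lt_of_le_of_ne (hcon i) hi
    have hslt : ∑ j, α j < ∑ j, β j :=
      Finset.sum_lt_sum (fun j _ => hcon j) ⟨i, Finset.mem_univ i, hlt⟩
    exact absurd (hβmin α hα) (not_le.mpr hslt)
  -- coefficients
  have hcβ : F.coeff β ≠ 0 := MvPolynomial.mem_support_iff.mp hβs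
  set W : MvPolynomial (Fin d) K := ∏ i, g i ^ (β i + 1) with hWdef
  have hW0 : W ≠ 0 := Finset.prod_ne_zero_iff.mpr fun i _ => pow_ne_zero _ (hg0 i)
  set num : (Fin (k'+1) →₀ ℕ) → MvPolynomial (Fin d) K := fun α =>
    C (- F.coeff α * (F.coeff β)⁻¹) * p * ∏ i, g i ^ (α i - (β i + 1)) with hnumdef
  set den : (Fin (k'+1) →₀ ℕ) → MvPolynomial (Fin d) K := fun α =>
    ∏ i, g i ^ ((β i + 1) - α i) with hdendef
  have hden0 : ∀ α, den α ≠ 0 := fun α =>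
    Finset.prod_ne_zero_iff.mpr fun i _ => pow_ne_zero _ (hg0 i)
  -- polynomial cross-multiplication identity
  have hcross : ∀ α, num α * W =
      (C (- F.coeff α * (F.coeff β)⁻¹) * p * ∏ i, g i ^ α i) * den α := by
    intro α
    rw [hnumdef, hdendef, hWdef]
    rw [mul_assoc, mul_assoc, mul_assoc, mul_assoc]
    congr 2
    rw [← Finset.prod_mul_distrib, ← Finset.prod_mul_distrib]
    refine Finset.prod_congr rfl fun i _ => ?_
    rw [← pow_add, ← pow_add]
    congr 1
    omega
  -- the relation in the fraction field
  have hrelR : ∑ α ∈ F.support, (C (F.coeff α) : MvPolynomial (Fin d) K) * ∏ i, g i ^ α i = 0 := by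
    rw [← hFq, aeval_def, eval₂_eq']
    simp [algebraMap_eq]
  have hrelL : ∑ α ∈ F.support, φ (C (F.coeff α)) * ∏ i, φ (g i) ^ α i = 0 := by
    have := congrArg φ hrelR
    simpa [map_sum, map_mul, map_prod, map_pow] using this
  have herase : ∑ α ∈ F.support.erase β, φ (C (F.coeff α)) * ∏ i, φ (g i) ^ α i
      = - (φ (C (F.coeff β)) * ∏ i, φ (g i) ^ β i) := by
    have h2 : F.support = insert β (F.support.erase β) := (Finset.insert_erase hβs).symm
    rw [h2, Finset.sum_insert (Finset.notMem_erase _ _)] at hrelL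
    linear_combination hrelL
  -- abbreviations in L
  set Pβ := ∏ i, φ (g i) ^ β i with hPβdef
  set PG := ∏ i, φ (g i) with hPGdef
  have hPβ0 : Pβ ≠ 0 := Finset.prod_ne_zero_iff.mpr fun i _ => pow_ne_zero _ (hφ _ (hg0 i))
  have hPG0 : PG ≠ 0 := Finset.prod_ne_zero_iff.mpr fun i _ => hφ _ (hg0 i)
  have hWsplit : φ W = Pβ * PG := by
    rw [hWdef, map_prod, hPβdef, hPGdef, ← Finset.prod_mul_distrib]
    exact Finset.prod_congr rfl fun i _ => by rw [map_pow, pow_succ]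
  have hone : φ (C ((F.coeff β)⁻¹)) * φ (C (F.coeff β)) = 1 := by
    rw [← map_mul, ← map_mul, inv_mul_cancel₀ hcβ, map_one, map_one]
  have hterm : ∀ α ∈ F.support.erase β, φ (num α) / φ (den α) =
      φ (C (- F.coeff α * (F.coeff β)⁻¹)) * φ p * (∏ i, φ (g i) ^ α i) / φ W := by
    intro α _
    rw [div_eq_div_iff (hφ _ (hden0 α)) (hφ _ hW0)]
    calc φ (num α) * φ W = φ (num α * W) := (map_mul _ _ _).symm
      _ = φ ((C (- F.coeff α * (F.coeff β)⁻¹) * p * ∏ i, g i ^ α i) * den α) := by rw [hcross α]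
      _ = φ (C (- F.coeff α * (F.coeff β)⁻¹)) * φ p * (∏ i, φ (g i) ^ α i) * φ (den α) := by
          simp [map_mul, map_prod, map_pow]
  have hmain : φ p / φ (∏ i, q i ^ e i) =
      ∑ α ∈ F.support.erase β, φ (num α) / φ (den α) := by
    rw [Finset.sum_congr rfl hterm, ← Finset.sum_div]
    have hnum2 : ∑ α ∈ F.support.erase β,
        φ (C (- F.coeff α * (F.coeff β)⁻¹)) * φ p * (∏ i, φ (g i) ^ α i)
        = φ (C ((F.coeff β)⁻¹)) * φ p * (φ (C (F.coeff β)) * Pβ) := by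
      calc ∑ α ∈ F.support.erase β,
          φ (C (- F.coeff α * (F.coeff β)⁻¹)) * φ p * (∏ i, φ (g i) ^ α i)
          = ∑ α ∈ F.support.erase β, (-(φ (C ((F.coeff β)⁻¹)) * φ p)) *
              (φ (C (F.coeff α)) * ∏ i, φ (g i) ^ α i) := by
            refine Finset.sum_congr rfl fun α _ => ?_
            have hC : (C (- F.coeff α * (F.coeff β)⁻¹) : MvPolynomial (Fin d) K)
                = -(C ((F.coeff β)⁻¹) * C (F.coeff α)) := by
              rw [← map_mul, ← map_neg]
              congr 1
              ring
            rw [hC, map_neg, map_mul]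
            ring
        _ = (-(φ (C ((F.coeff β)⁻¹)) * φ p)) * ∑ α ∈ F.support.erase β,
              (φ (C (F.coeff α)) * ∏ i, φ (g i) ^ α i) := by rw [← Finset.mul_sum]
        _ = (-(φ (C ((F.coeff β)⁻¹)) * φ p)) * (- (φ (C (F.coeff β)) * Pβ)) := by rw [herase]
        _ = φ (C ((F.coeff β)⁻¹)) * φ p * (φ (C (F.coeff β)) * Pβ) := by ring
    rw [hnum2, hWsplit]
    have hφprod : φ (∏ i, q i ^ e i) = PG := by
      rw [hPGdef, map_prod]
    rw [hφprod, div_eq_div_iff hPG0 (mul_ne_zero hPβ0 hPG0)]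
    linear_combination (-(φ p * Pβ * PG)) * hone
  rw [hmain]
  refine GoodFrac.sum _ _ ?_
  intro α hα
  obtain ⟨i₀, hi₀⟩ := hkey α (Finset.mem_of_mem_erase hα) (Finset.ne_of_mem_erase hα)
  have hexp : β i₀ + 1 - α i₀ = 0 := by omega
  have hdeneq : den α = ∏ j : Fin k',
      (q (i₀.succAbove j)) ^ (e (i₀.succAbove j) * (β (i₀.succAbove j) + 1 - α (i₀.succAbove j))) := by
    rw [hdendef]
    have hfac : ∀ i : Fin (k'+1), g i ^ (β i + 1 - α i) = q i ^ (e i * (β i + 1 - α i)) :=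
      fun i => by rw [hgdef]; rw [← pow_mul]
    simp only [hfac]
    rw [Fin.prod_univ_succAbove (fun i => q i ^ (e i * (β i + 1 - α i))) i₀, hexp]
    simp
  rw [hdeneq]
  exact IH k' (Nat.lt_succ_self k') (fun j => q (i₀.succAbove j)) (fun j => hq _)
    (fun j j' hne => hassoc _ _ (fun hc => hne (Fin.succAbove_right_injective hc)))
    (fun j => e (i₀.succAbove j) * (β (i₀.succAbove j) + 1 - α (i₀.succAbove j))) (num α)

theorem final (hd : 1 ≤ d) (f : FractionRing (MvPolynomial (Fin d) K)) : GoodFrac K d f := by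
  classical
  letI : NormalizationMonoid (MvPolynomial (Fin d) K) :=
    UniqueFactorizationMonoid.normalizationMonoid.toNormalizationMonoid
  obtain ⟨pnum, pden, hden, hdiv⟩ :=
    IsFractionRing.div_surjective (A := MvPolynomial (Fin d) K) f
  have hq0 : pden ≠ 0 := nonZeroDivisors.ne_zero hden
  obtain ⟨u, hu⟩ := prod_normalizedFactors hq0
  set fac := normalizedFactors pden with hfac
  set s := fac.toFinset with hs
  set ε := s.equivFin with hε
  set r : Fin s.card → MvPolynomial (Fin d) K := fun j => (ε.symm j : MvPolynomial (Fin d) K)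
    with hr
  set e : Fin s.card → ℕ := fun j => fac.count ((ε.symm j : MvPolynomial (Fin d) K)) with he
  have hmem : ∀ j, (ε.symm j : MvPolynomial (Fin d) K) ∈ fac := fun j =>
    Multiset.mem_toFinset.mp (ε.symm j).2
  have hirr : ∀ j, Irreducible (r j) := fun j => irreducible_of_normalized_factor _ (hmem j)
  have hassoc : ∀ i i', i ≠ i' → ¬ Associated (r i) (r i') := by
    intro i i' hne hassoc
    have h1 : normalize (r i) = normalize (r i') :=
      normalize_eq_normalize hassoc.dvd hassoc.symm.dvd
    rw [normalize_normalized_factor _ (hmem i), normalize_normalized_factor _ (hmem i')] at h1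
    exact hne (ε.symm.injective (Subtype.ext h1))
  have hprod : ∏ j, r j ^ e j = fac.prod := by
    rw [Finset.prod_multiset_count fac]
    rw [← Finset.prod_coe_sort s (fun a => a ^ fac.count a)]
    exact Equiv.prod_comp ε.symm (fun a => (a : MvPolynomial (Fin d) K) ^ fac.count (a : MvPolynomial (Fin d) K))
  have hprod0 : fac.prod ≠ 0 := left_ne_zero_of_mul (hu ▸ hq0)
  have hfeq : f = algebraMap _ (FractionRing (MvPolynomial (Fin d) K)) (pnum * ↑u⁻¹) /
      algebraMap _ _ (∏ j, r j ^ e j) := by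
    rw [hprod, ← hdiv]
    have hinj : Function.Injective (algebraMap (MvPolynomial (Fin d) K)
        (FractionRing (MvPolynomial (Fin d) K))) :=
      IsFractionRing.injective _ _
    have h1 : algebraMap (MvPolynomial (Fin d) K) (FractionRing (MvPolynomial (Fin d) K))
        fac.prod ≠ 0 := by simpa using (map_ne_zero_iff _ hinj).mpr hprod0
    have h2 : algebraMap (MvPolynomial (Fin d) K) (FractionRing (MvPolynomial (Fin d) K))
        pden ≠ 0 := by simpa using (map_ne_zero_iff _ hinj).mpr hq0
    rw [div_eq_div_iff h2 h1, ← map_mul, ← map_mul]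
    congr 1
    have h3 : pnum * ↑u⁻¹ * pden = pnum * ↑u⁻¹ * (fac.prod * ↑u) := by
      rw [hfac, hu]
    rw [h3, show pnum * ↑u⁻¹ * (fac.prod * ↑u)
      = pnum * fac.prod * (↑u⁻¹ * ↑u) from by ring, u.inv_mul, mul_one]
  rw [hfeq]
  have hG := goodfrac_div hd s.card r hirr hassoc e (pnum * ↑u⁻¹)
  exact hG

end Aux

/-- **Corollary.** Every rational function in `d` variables is a finite sum of
rational functions each of whose denominators has at most `d` pairwise
non-associate irreducible factors. -/
theorem sum_of_fractions_with_at_most_d_irreducible_factors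
    {K : Type*} [Field K] {d : ℕ} (hd : 1 ≤ d)
    (f : FractionRing (MvPolynomial (Fin d) K)) :
    ∃ (n : ℕ) (p den : Fin n → MvPolynomial (Fin d) K),
      (∀ j, den j ≠ 0) ∧
      (∀ j, ∃ (k : ℕ), k ≤ d ∧
        ∃ (c : MvPolynomial (Fin d) K) (r : Fin k → MvPolynomial (Fin d) K)
          (e : Fin k → ℕ),
          IsUnit c ∧ (∀ i, Irreducible (r i)) ∧
          (∀ i i', i ≠ i' → ¬ Associated (r i) (r i')) ∧
          den j = c * ∏ i, r i ^ e i) ∧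
      f = ∑ j, algebraMap (MvPolynomial (Fin d) K) (FractionRing (MvPolynomial (Fin d) K)) (p j) /
            algebraMap (MvPolynomial (Fin d) K) (FractionRing (MvPolynomial (Fin d) K)) (den j) := by
  exact final hd f
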